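/- arXiv:math/0511567 — 2 statements merged into one kernel-verified Lean document; each statement's English description precedes it below -/
import Mathlib

section
/- Let C = 2^ω with the lexicographic order <_lx and its order topology (the Cantor space). Let Q ⊆ C be the set of all points of C that are isolated from the left or from the right (in particular the minimum and maximum of C belong to Q), and let D = (C × {0}) ∪ (Q × C), ordered lexicographically as a subset of C ×_lex C, with its order topology. Then D is order isomorphic to C, and the first-coordinate projection π : D → C is a continuous order-preserving retraction, i.e. there is a continuous map i : C → D with π ∘ i = id_C. -/
/-- The Cantor set `2^ω` with the lexicographic order. -/
abbrev CantorLex : Type := Lex (ℕ → Bool)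

/-- `CantorLex` carries its order topology (which coincides with the usual Cantor space
topology). -/
noncomputable instance : TopologicalSpace CantorLex := Preorder.topology CantorLex

/-- A point of a linear order is isolated from the left if it is the minimum or has an
immediate predecessor; isolated from the right if it is the maximum or has an immediate
successor.  `QSet` is the set of points of `C` isolated from the left or the right. -/
def QSet : Set CantorLex :=
  {p | (IsMin p ∨ ∃ q, q ⋖ p) ∨ (IsMax p ∨ ∃ q, p ⋖ q)}

/-- `D = (C × {0}) ∪ (Q × C)` as a suborder of the lexicographic square `C ×ₗ C`. -/
def DSet : Set (CantorLex ×ₗ CantorLex) :=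
  {x | (ofLex x).2 = toLex (fun _ => false) ∨ (ofLex x).1 ∈ QSet}

/-- `D` with its linear order. -/
abbrev DSpace : Type := ↥DSet

/-- `D` carries the order topology of its linear order. -/
noncomputable instance : TopologicalSpace DSpace := Preorder.topology DSpace

namespace CantorAux

/-- explicit bottom and top -/
def cbot : CantorLex := toLex fun _ => false
def ctop : CantorLex := toLex fun _ => true

theorem lt_iff' {x y : CantorLex} :
    x < y ↔ ∃ n, (∀ k < n, ofLex x k = ofLex y k) ∧ ofLex x n = false ∧ ofLex y n = true := by
  constructor
  · rintro ⟨n, h1, h2⟩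
    exact ⟨n, fun k hk => h1 k hk, Bool.lt_iff.1 h2⟩
  · rintro ⟨n, h1, h2, h3⟩
    exact ⟨n, fun k hk => h1 k hk, Bool.lt_iff.2 ⟨h2, h3⟩⟩

theorem le_ext {x y : CantorLex}
    (H : ∀ n, (∀ k < n, ofLex x k = ofLex y k) → ofLex x n ≤ ofLex y n) : x ≤ y := by
  by_contra h
  rcases lt_iff'.1 (lt_of_not_ge h) with ⟨n, h1, h2, h3⟩
  have := H n (fun k hk => (h1 k hk).symm)
  rw [h2, h3] at this
  exact absurd this (by simp)

theorem lt_of_firstdiff {x y : CantorLex} (n : ℕ) (h1 : ∀ k < n, ofLex x k = ofLex y k)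
    (h2 : ofLex x n = false) (h3 : ofLex y n = true) : x < y :=
  lt_iff'.2 ⟨n, h1, h2, h3⟩

theorem cbot_le (x : CantorLex) : cbot ≤ x := le_ext fun n _ => by
  show false ≤ _; simp

theorem le_ctop (x : CantorLex) : x ≤ ctop := le_ext fun n _ => by
  show _ ≤ true; simp

theorem cbot_lt_ctop : cbot < ctop := lt_of_firstdiff 0 (by simp) rfl rfl

theorem isMin_iff {x : CantorLex} : IsMin x ↔ x = cbot :=
  ⟨fun h => le_antisymm (h (cbot_le x)) (cbot_le x), fun h => h ▸ fun b _ => cbot_le b⟩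

theorem isMax_iff {x : CantorLex} : IsMax x ↔ x = ctop :=
  ⟨fun h => le_antisymm (le_ctop x) (h (le_ctop x)), fun h => h ▸ fun b _ => le_ctop b⟩

open scoped Classical in
/-- greedy least upper bound -/
noncomputable def lubFun (S : Set CantorLex) : ℕ → Bool :=
  WellFounded.fix (Nat.lt_wfRel.wf)
    (fun n ih => decide (∃ x ∈ S, (∀ k, ∀ h : k < n, ofLex x k = ih k h) ∧ ofLex x n = true))

theorem lubFun_eq (S : Set CantorLex) (n : ℕ) :
    lubFun S n = true ↔ ∃ x ∈ S, (∀ k < n, ofLex x k = lubFun S k) ∧ ofLex x n = true := by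
  classical
  rw [lubFun, WellFounded.fix_eq]
  rw [decide_eq_true_iff]

noncomputable def lubC (S : Set CantorLex) : CantorLex := toLex (lubFun S)

theorem isLUB_lubC (S : Set CantorLex) : IsLUB S (lubC S) := by
  constructor
  · intro x hx
    by_contra h
    rcases lt_iff'.1 (lt_of_not_ge h) with ⟨n, h1, h2, h3⟩
    have : lubFun S n = true := (lubFun_eq S n).2 ⟨x, hx, fun k hk => (h1 k hk).symm, h3⟩
    have h2' : lubFun S n = false := h2
    rw [h2'] at this; cases this
  · intro b hb
    by_contra h
    rcases lt_iff'.1 (lt_of_not_ge h) with ⟨n, h1, h2, h3⟩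
    rcases (lubFun_eq S n).1 h3 with ⟨x, hx, hpre, hxn⟩
    have : b < x := lt_of_firstdiff n (fun k hk => ((hpre k hk).trans (h1 k hk).symm).symm) h2 hxn
    exact absurd (hb hx) (not_le.2 this)

/-- characterization of covering pairs (jumps) in CantorLex -/
theorem covby_iff {x y : CantorLex} :
    x ⋖ y ↔ ∃ n, (∀ k < n, ofLex x k = ofLex y k) ∧ (ofLex x n = false ∧ ofLex y n = true) ∧
      (∀ k, n < k → ofLex x k = true ∧ ofLex y k = false) := by
  constructor
  · rintro ⟨hlt, hbetween⟩
    rcases lt_iff'.1 hlt with ⟨n, h1, h2, h3⟩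
    refine ⟨n, h1, ⟨h2, h3⟩, fun k hk => ?_⟩
    constructor
    · by_contra hxk
      have hxk' : ofLex x k = false := by revert hxk; cases (ofLex x k) <;> simp
      -- z := x with bit k set to true
      set z : CantorLex := toLex (fun j => if j = k then true else ofLex x j) with hz
      have hxz : x < z := by
        refine lt_of_firstdiff k (fun j hj => ?_) hxk' (by simp [hz])
        show ofLex x j = if j = k then true else ofLex x j
        simp [Nat.ne_of_lt hj]
      have hzy : z < y := by
        refine lt_of_firstdiff n (fun j hj => ?_) ?_ h3
        · show (if j = k then true else ofLex x j) = ofLex y j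
          rw [if_neg (by omega), h1 j hj]
        · show (if n = k then true else ofLex x n) = false
          rw [if_neg (by omega), h2]
      exact hbetween hxz hzy
    · by_contra hyk
      have hyk' : ofLex y k = true := by revert hyk; cases (ofLex y k) <;> simp
      set z : CantorLex := toLex (fun j => if j = k then false else ofLex y j) with hz
      have hzy : z < y := by
        refine lt_of_firstdiff k (fun j hj => ?_) (by simp [hz]) hyk'
        show (if j = k then false else ofLex y j) = ofLex y j
        simp [Nat.ne_of_lt hj]
      have hxz : x < z := by
        refine lt_of_firstdiff n (fun j hj => ?_) h2 ?_
        · show ofLex x j = if j = k then false else ofLex y j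
          rw [if_neg (by omega), h1 j hj]
        · show (if n = k then false else ofLex y n) = true
          rw [if_neg (by omega), h3]
      exact hbetween hxz hzy
  · rintro ⟨n, h1, ⟨h2, h3⟩, h4⟩
    constructor
    · exact lt_of_firstdiff n h1 h2 h3
    · intro z hxz hzy
      rcases lt_iff'.1 hxz with ⟨m, g1, g2, g3⟩
      rcases lt_iff'.1 hzy with ⟨m', f1, f2, f3⟩
      rcases lt_trichotomy m n with hmn | hmn | hmn
      · -- x m = y m, x m = false so y m = false, but z m = true, z < y diff at ?
        have hym : ofLex y m = false := by rw [← h1 m hmn]; exact g2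
        -- first diff of z,y: for k < m, z k = x k = y k; at m: z m = true, y m = false : z > y
        have : y < z := lt_of_firstdiff m
          (fun k hk => by rw [← g1 k hk, ← h1 k (hk.trans hmn)]) hym g3
        exact absurd hzy (not_lt.2 this.le)
      · -- m = n : z n = true = y n, z agrees x below n; diff m' of z,y must be > n, but y k false
        subst hmn
        have hm' : m < m' := by
          rcases lt_trichotomy m' m with h | h | h
          · exfalso
            have : ofLex y m' = false := by rw [← h1 m' h, g1 m' h]; exact f2
            rw [this] at f3; cases f3
          · exfalso; rw [h] at f2; rw [f2] at g3; cases g3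
          · exact h
        rcases h4 m' hm' with ⟨_, hy⟩
        rw [hy] at f3; cases f3
      · -- m > n: z n = x n = false, but need x < z with all x k = true for n<k<m...
        have := (h4 m hmn).1
        rw [this] at g2; cases g2

/-- generic: covby successors are unique -/
theorem covby_right_unique {α : Type*} [LinearOrder α] {a b c : α} (h1 : a ⋖ b) (h2 : a ⋖ c) :
    b = c := by
  rcases lt_trichotomy b c with h | h | h
  · exact absurd h (h2.2 h1.lt)
  · exact h
  · exact absurd h (h1.2 h2.lt)

theorem covby_left_unique {α : Type*} [LinearOrder α] {a b c : α} (h1 : a ⋖ c) (h2 : b ⋖ c) :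
    a = b := by
  rcases lt_trichotomy a b with h | h | h
  · exact absurd h2.lt (h1.2 h)
  · exact h
  · exact absurd h1.lt (h2.2 h)

def leftJ (x : CantorLex) (n : ℕ) : CantorLex :=
  toLex fun k => if k < n then ofLex x k else if k = n then false else true
def rightJ (x : CantorLex) (n : ℕ) : CantorLex :=
  toLex fun k => if k < n then ofLex x k else if k = n then true else false

theorem leftJ_covby (x : CantorLex) (n : ℕ) : leftJ x n ⋖ rightJ x n := by
  refine covby_iff.2 ⟨n, fun k hk => ?_, ⟨?_, ?_⟩, fun k hk => ⟨?_, ?_⟩⟩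
  · show (if k < n then ofLex x k else _) = (if k < n then ofLex x k else _)
    rw [if_pos hk, if_pos hk]
  · show (if n < n then _ else if n = n then false else _) = false
    simp
  · show (if n < n then _ else if n = n then true else _) = true
    simp
  · show (if k < n then ofLex x k else if k = n then false else true) = true
    rw [if_neg (by omega), if_neg (by omega)]
  · show (if k < n then ofLex x k else if k = n then true else false) = false
    rw [if_neg (by omega), if_neg (by omega)]

theorem dense_jumpC {x y : CantorLex} (h : x < y) :
    ∃ c d : CantorLex, c ⋖ d ∧ x ≤ c ∧ d ≤ y := by
  rcases lt_iff'.1 h with ⟨n, h1, h2, h3⟩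
  refine ⟨leftJ x n, rightJ x n, leftJ_covby x n, ?_, ?_⟩
  · refine le_ext fun m _ => ?_
    show ofLex x m ≤ (if m < n then ofLex x m else if m = n then false else true)
    rcases lt_trichotomy m n with hm | hm | hm
    · rw [if_pos hm]
    · rw [if_neg (by omega), if_pos hm, hm, h2]
    · rw [if_neg (by omega), if_neg (by omega)]; exact Bool.le_true _
  · refine le_ext fun m _ => ?_
    show (if m < n then ofLex x m else if m = n then true else false) ≤ ofLex y m
    rcases lt_trichotomy m n with hm | hm | hm
    · rw [if_pos hm, h1 m hm]
    · rw [if_neg (by omega), if_pos hm, hm, h3]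
    · rw [if_neg (by omega), if_neg (by omega)]; exact Bool.false_le _

theorem not_left_and_right {x : CantorLex} (h1 : ∃ d, x ⋖ d) (h2 : ∃ c, c ⋖ x) : False := by
  rcases h1 with ⟨d, hd⟩
  rcases h2 with ⟨c, hc⟩
  rcases covby_iff.1 hd with ⟨n, _, _, h4⟩
  rcases covby_iff.1 hc with ⟨m, _, _, g4⟩
  have e1 := (h4 (max n m + 1) (by omega)).1
  have e2 := (g4 (max n m + 1) (by omega)).2
  rw [e1] at e2; cases e2

theorem cbot_not_left {d : CantorLex} (h : cbot ⋖ d) : False := by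
  rcases covby_iff.1 h with ⟨n, _, _, h4⟩
  have := (h4 (n+1) (by omega)).1
  simp [cbot] at this

theorem ctop_not_right {c : CantorLex} (h : c ⋖ ctop) : False := by
  rcases covby_iff.1 h with ⟨n, _, _, h4⟩
  have := (h4 (n+1) (by omega)).2
  simp [ctop] at this

theorem cbot_not_right {c : CantorLex} (h : c ⋖ cbot) : False :=
  absurd h.lt (not_lt.2 (cbot_le c))

theorem ctop_not_left {d : CantorLex} (h : ctop ⋖ d) : False :=
  absurd h.lt (not_lt.2 (le_ctop d))

theorem left_endpoint_spec {x : CantorLex} (h : ∃ d, x ⋖ d) :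
    ∃ n, ofLex x n = false ∧ ∀ k, n < k → ofLex x k = true := by
  rcases h with ⟨d, hd⟩
  rcases covby_iff.1 hd with ⟨n, _, ⟨h2, _⟩, h4⟩
  exact ⟨n, h2, fun k hk => (h4 k hk).1⟩

theorem left_endpoint_ne_cbot {x : CantorLex} (h : ∃ d, x ⋖ d) : x ≠ cbot := by
  rintro rfl; exact cbot_not_left h.choose_spec

theorem left_endpoint_ne_ctop {x : CantorLex} (h : ∃ d, x ⋖ d) : x ≠ ctop := by
  rintro rfl; exact ctop_not_left h.choose_spec

theorem right_endpoint_ne_cbot {x : CantorLex} (h : ∃ c, c ⋖ x) : x ≠ cbot := by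
  rintro rfl; exact cbot_not_right h.choose_spec

theorem right_endpoint_ne_ctop {x : CantorLex} (h : ∃ c, c ⋖ x) : x ≠ ctop := by
  rintro rfl; exact ctop_not_right h.choose_spec

/-- eventual constancy spec, for encoding -/
theorem eventually_const_of_left {x : CantorLex} (h : ∃ d, x ⋖ d) :
    ∃ n, ∀ k, n ≤ k → ofLex x k = ofLex x n := by
  rcases left_endpoint_spec h with ⟨n, _, h2⟩
  exact ⟨n + 1, fun k hk => by rw [h2 k (by omega), h2 (n+1) (by omega)]⟩

theorem eventually_const_of_right {x : CantorLex} (h : ∃ c, c ⋖ x) :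
    ∃ n, ∀ k, n ≤ k → ofLex x k = ofLex x n := by
  rcases h with ⟨c, hc⟩
  rcases covby_iff.1 hc with ⟨n, _, _, h4⟩
  exact ⟨n + 1, fun k hk => by rw [(h4 k (by omega)).2, (h4 (n+1) (by omega)).2]⟩

theorem eventually_const_cbot : ∃ n, ∀ k, n ≤ k → ofLex cbot k = ofLex cbot n := ⟨0, fun _ _ => rfl⟩
theorem eventually_const_ctop : ∃ n, ∀ k, n ≤ k → ofLex ctop k = ofLex ctop n := ⟨0, fun _ _ => rfl⟩

open scoped Classical in
/-- encoding of an eventually-constant element -/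
noncomputable def encQ (x : CantorLex) (h : ∃ n, ∀ k, n ≤ k → ofLex x k = ofLex x n) :
    List Bool × Bool :=
  (List.ofFn (fun i : Fin (Nat.find h) => ofLex x i), ofLex x (Nat.find h))

open scoped Classical in
theorem encQ_inj {x y : CantorLex} (hx : ∃ n, ∀ k, n ≤ k → ofLex x k = ofLex x n)
    (hy : ∃ n, ∀ k, n ≤ k → ofLex y k = ofLex y n) (h : encQ x hx = encQ y hy) : x = y := by
  rcases Prod.mk.injEq .. ▸ h with ⟨h1, h2⟩
  have hlen : Nat.find hx = Nat.find hy := by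
    have := congrArg List.length h1
    simp only [List.length_ofFn] at this; exact this
  have hpre : ∀ k, k < Nat.find hx → ofLex x k = ofLex y k := by
    intro k hk
    have := congrArg (fun l => l[k]?) h1
    simp only [List.getElem?_ofFn] at this
    rw [dif_pos hk, dif_pos (hlen ▸ hk)] at this
    exact Option.some.inj this
  have : ofLex x = ofLex y := by
    funext k
    rcases lt_or_ge k (Nat.find hx) with hk | hk
    · exact hpre k hk
    · rw [Nat.find_spec hx k hk, h2, ← Nat.find_spec hy k (hlen ▸ hk)]
  exact congrArg toLex this

/-! ### D-side -/

def pi1 (u : DSpace) : CantorLex := (ofLex u.val).1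
def pi2 (u : DSpace) : CantorLex := (ofLex u.val).2

theorem mem_DSet {p : CantorLex × CantorLex} :
    toLex p ∈ DSet ↔ p.2 = cbot ∨ p.1 ∈ QSet := Iff.rfl

theorem base_mem (x : CantorLex) : toLex (x, cbot) ∈ DSet := Or.inl rfl
theorem fiber_mem {x : CantorLex} (h : x ∈ QSet) (y : CantorLex) : toLex (x, y) ∈ DSet := Or.inr h

theorem pi2_eq_cbot {u : DSpace} (h : pi1 u ∉ QSet) : pi2 u = cbot :=
  u.prop.resolve_right h

theorem mem_q_of_pi2_ne {u : DSpace} (h : pi2 u ≠ cbot) : pi1 u ∈ QSet :=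
  u.prop.resolve_left h

theorem dlt_iff {u v : DSpace} : u < v ↔ pi1 u < pi1 v ∨ (pi1 u = pi1 v ∧ pi2 u < pi2 v) := by
  rw [← Subtype.coe_lt_coe]
  exact Prod.Lex.lt_iff

theorem dle_iff {u v : DSpace} : u ≤ v ↔ pi1 u < pi1 v ∨ (pi1 u = pi1 v ∧ pi2 u ≤ pi2 v) := by
  rw [← Subtype.coe_le_coe]
  exact Prod.Lex.le_iff

theorem dext {u v : DSpace} (h1 : pi1 u = pi1 v) (h2 : pi2 u = pi2 v) : u = v := by
  apply Subtype.ext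
  have : ofLex u.val = ofLex v.val := Prod.ext h1 h2
  exact congrArg toLex this

def dbot : DSpace := ⟨toLex (cbot, cbot), base_mem cbot⟩
def dtop : DSpace := ⟨toLex (ctop, ctop), fiber_mem (Or.inr (Or.inl (isMax_iff.2 rfl))) ctop⟩

theorem dbot_le (u : DSpace) : dbot ≤ u := by
  rw [dle_iff]
  rcases eq_or_lt_of_le (cbot_le (pi1 u)) with h | h
  · exact Or.inr ⟨h, cbot_le _⟩
  · exact Or.inl h

theorem le_dtop (u : DSpace) : u ≤ dtop := by
  rw [dle_iff]
  rcases eq_or_lt_of_le (le_ctop (pi1 u)) with h | h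
  · exact Or.inr ⟨h, le_ctop _⟩
  · exact Or.inl h

theorem isMin_iff_D {u : DSpace} : IsMin u ↔ u = dbot :=
  ⟨fun h => le_antisymm (h (dbot_le u)) (dbot_le u), fun h => h ▸ fun b _ => dbot_le b⟩

theorem isMax_iff_D {u : DSpace} : IsMax u ↔ u = dtop :=
  ⟨fun h => le_antisymm (le_dtop u) (h (le_dtop u)), fun h => h ▸ fun b _ => le_dtop b⟩

/-- covering pairs in D -/
theorem covD_iff {u v : DSpace} : u ⋖ v ↔
    (pi1 u = pi1 v ∧ pi2 u ⋖ pi2 v) ∨ (pi1 u ⋖ pi1 v ∧ pi2 u = ctop ∧ pi2 v = cbot) := by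
  constructor
  · rintro ⟨hlt, hbetween⟩
    rcases dlt_iff.1 hlt with h | ⟨h1, h2⟩
    · -- first coordinates differ
      right
      have hv2 : pi2 v = cbot := by
        by_contra hv2
        have hq : pi1 v ∈ QSet := mem_q_of_pi2_ne hv2
        have hmem : toLex (pi1 v, cbot) ∈ DSet := base_mem _
        have hb1 : u < (⟨toLex (pi1 v, cbot), hmem⟩ : DSpace) := dlt_iff.2 (Or.inl h)
        have hb2 : (⟨toLex (pi1 v, cbot), hmem⟩ : DSpace) < v :=
          dlt_iff.2 (Or.inr ⟨rfl, lt_of_le_of_ne (cbot_le _) (Ne.symm hv2)⟩)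
        exact hbetween hb1 hb2
      have hcov : pi1 u ⋖ pi1 v := by
        refine ⟨h, fun z hz1 hz2 => ?_⟩
        have hb1 : u < (⟨toLex (z, cbot), base_mem z⟩ : DSpace) := dlt_iff.2 (Or.inl hz1)
        have hb2 : (⟨toLex (z, cbot), base_mem z⟩ : DSpace) < v := dlt_iff.2 (Or.inl hz2)
        exact hbetween hb1 hb2
      have hu2 : pi2 u = ctop := by
        by_contra hu2
        have hq : pi1 u ∈ QSet := Or.inr (Or.inr ⟨_, hcov⟩)
        have hb1 : u < (⟨toLex (pi1 u, ctop), fiber_mem hq ctop⟩ : DSpace) :=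
          dlt_iff.2 (Or.inr ⟨rfl, lt_of_le_of_ne (le_ctop _) hu2⟩)
        have hb2 : (⟨toLex (pi1 u, ctop), fiber_mem hq ctop⟩ : DSpace) < v :=
          dlt_iff.2 (Or.inl h)
        exact hbetween hb1 hb2
      exact ⟨hcov, hu2, hv2⟩
    · left
      refine ⟨h1, h2, fun t ht1 ht2 => ?_⟩
      have hqv : pi1 v ∈ QSet := by
        apply mem_q_of_pi2_ne (u := v)
        intro hv2
        rw [hv2] at ht2
        exact absurd ht2 (not_lt.2 (cbot_le t))
      have hq : pi1 u ∈ QSet := by rw [h1]; exact hqv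
      have hb1 : u < (⟨toLex (pi1 u, t), fiber_mem hq t⟩ : DSpace) :=
        dlt_iff.2 (Or.inr ⟨rfl, ht1⟩)
      have hb2 : (⟨toLex (pi1 u, t), fiber_mem hq t⟩ : DSpace) < v :=
        dlt_iff.2 (Or.inr ⟨h1, ht2⟩)
      exact hbetween hb1 hb2
  · rintro (⟨h1, h2⟩ | ⟨h1, h2, h3⟩)
    · refine ⟨dlt_iff.2 (Or.inr ⟨h1, h2.lt⟩), fun z hz1 hz2 => ?_⟩
      rcases dlt_iff.1 hz1 with g | ⟨g1, g2⟩
      · rcases dlt_iff.1 hz2 with f | ⟨f1, f2⟩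
        · exact absurd (h1 ▸ g.trans f) (lt_irrefl _)
        · exact absurd (f1 ▸ h1 ▸ g) (lt_irrefl _)
      · rcases dlt_iff.1 hz2 with f | ⟨f1, f2⟩
        · exact absurd (h1 ▸ g1 ▸ f) (lt_irrefl _)
        · exact h2.2 g2 f2
    · refine ⟨dlt_iff.2 (Or.inl h1.lt), fun z hz1 hz2 => ?_⟩
      rcases dlt_iff.1 hz1 with g | ⟨g1, g2⟩
      · rcases dlt_iff.1 hz2 with f | ⟨f1, f2⟩
        · exact h1.2 g f
        · rw [h3] at f2; exact absurd f2 (not_lt.2 (cbot_le _))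
      · rw [h2] at g2; exact absurd g2 (not_lt.2 (le_ctop _))

theorem dense_jumpD {u v : DSpace} (h : u < v) :
    ∃ c d : DSpace, c ⋖ d ∧ u ≤ c ∧ d ≤ v := by
  rcases dlt_iff.1 h with h1 | ⟨h1, h2⟩
  · -- first coords differ: type-2 jump
    rcases dense_jumpC h1 with ⟨p, p', hpp, hup, hpv⟩
    have hpq : p ∈ QSet := Or.inr (Or.inr ⟨p', hpp⟩)
    have hp'q : p' ∈ QSet := Or.inl (Or.inr ⟨p, hpp⟩)
    refine ⟨⟨toLex (p, ctop), fiber_mem hpq ctop⟩, ⟨toLex (p', cbot), base_mem p'⟩, ?_, ?_, ?_⟩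
    · exact covD_iff.2 (Or.inr ⟨hpp, rfl, rfl⟩)
    · rw [dle_iff]
      rcases eq_or_lt_of_le hup with heq | hlt
      · exact Or.inr ⟨heq, le_ctop _⟩
      · exact Or.inl hlt
    · rw [dle_iff]
      rcases eq_or_lt_of_le hpv with heq | hlt
      · exact Or.inr ⟨heq, cbot_le _⟩
      · exact Or.inl hlt
  · -- same fiber
    have hq : pi1 v ∈ QSet := by
      apply mem_q_of_pi2_ne (u := v)
      intro hv2
      rw [hv2] at h2
      exact absurd h2 (not_lt.2 (cbot_le _))
    rcases dense_jumpC h2 with ⟨c, d, hcd, huc, hdv⟩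
    refine ⟨⟨toLex (pi1 v, c), fiber_mem hq c⟩, ⟨toLex (pi1 v, d), fiber_mem hq d⟩, ?_, ?_, ?_⟩
    · exact covD_iff.2 (Or.inl ⟨rfl, hcd⟩)
    · exact dle_iff.2 (Or.inr ⟨h1, huc⟩)
    · exact dle_iff.2 (Or.inr ⟨rfl, hdv⟩)


theorem pi1_mono {u v : DSpace} (h : u ≤ v) : pi1 u ≤ pi1 v := by
  rcases dle_iff.1 h with h | ⟨h, _⟩
  · exact h.le
  · exact h.le

theorem pi2_mono_of_eq {u v : DSpace} (h : u ≤ v) (he : pi1 u = pi1 v) : pi2 u ≤ pi2 v := by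
  rcases dle_iff.1 h with h | ⟨_, h2⟩
  · exact absurd he (ne_of_lt h)
  · exact h2

theorem exists_isLUB_D (S : Set DSpace) : ∃ u : DSpace, IsLUB S u := by
  classical
  set a := lubC (pi1 '' S) with ha_def
  have ha : IsLUB (pi1 '' S) a := isLUB_lubC _
  set F := pi2 '' {u ∈ S | pi1 u = a} with hF_def
  set b := lubC F with hb_def
  have hb : IsLUB F b := isLUB_lubC _
  have hmem : toLex (a, b) ∈ DSet := by
    by_cases hq : a ∈ QSet
    · exact fiber_mem hq b
    · left
      show b = cbot
      have : cbot ∈ upperBounds F := by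
        rintro y ⟨u, ⟨huS, hua⟩, rfl⟩
        have : pi2 u = cbot := pi2_eq_cbot (by rw [hua]; exact hq)
        rw [this]
      exact le_antisymm (hb.2 this) (cbot_le b)
  refine ⟨⟨toLex (a, b), hmem⟩, ?_, ?_⟩
  · intro u huS
    have h1 : pi1 u ≤ a := ha.1 ⟨u, huS, rfl⟩
    rcases eq_or_lt_of_le h1 with heq | hlt
    · exact dle_iff.2 (Or.inr ⟨heq, hb.1 ⟨u, ⟨huS, heq⟩, rfl⟩⟩)
    · exact dle_iff.2 (Or.inl hlt)
  · intro v hv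
    have h1 : a ≤ pi1 v := by
      apply ha.2
      rintro y ⟨u, huS, rfl⟩
      exact pi1_mono (hv huS)
    rcases eq_or_lt_of_le h1 with heq | hlt
    · refine dle_iff.2 (Or.inr ⟨heq, ?_⟩)
      apply hb.2
      rintro y ⟨u, ⟨huS, hua⟩, rfl⟩
      exact pi2_mono_of_eq (hv huS) (by rw [hua, heq])
    · exact dle_iff.2 (Or.inl hlt)

theorem cbot_ne_ctop : cbot ≠ ctop := ne_of_lt cbot_lt_ctop

theorem not_left_and_right_D {u : DSpace} (h1 : ∃ v, u ⋖ v) (h2 : ∃ c, c ⋖ u) : False := by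
  rcases h1 with ⟨v, hv⟩
  rcases h2 with ⟨c, hc⟩
  rcases covD_iff.1 hv with ⟨_, hL⟩ | ⟨_, hL, _⟩ <;>
    rcases covD_iff.1 hc with ⟨_, hR⟩ | ⟨_, _, hR⟩
  · exact not_left_and_right ⟨_, hL⟩ ⟨_, hR⟩
  · rw [hR] at hL; exact cbot_not_left hL
  · rw [hL] at hR; exact ctop_not_right hR
  · rw [hL] at hR; exact cbot_ne_ctop hR.symm

theorem dbot_not_left {v : DSpace} (h : dbot ⋖ v) : False := by
  rcases covD_iff.1 h with ⟨_, hL⟩ | ⟨_, hL, _⟩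
  · exact cbot_not_left hL
  · exact cbot_ne_ctop hL

theorem dtop_not_right {c : DSpace} (h : c ⋖ dtop) : False := by
  rcases covD_iff.1 h with ⟨_, hR⟩ | ⟨_, _, hR⟩
  · exact ctop_not_right hR
  · exact cbot_ne_ctop hR.symm

theorem dbot_not_right {c : DSpace} (h : c ⋖ dbot) : False :=
  absurd h.lt (not_lt.2 (dbot_le c))

theorem dtop_not_left {v : DSpace} (h : dtop ⋖ v) : False :=
  absurd h.lt (not_lt.2 (le_dtop v))

theorem evconst_of_QSet {x : CantorLex} (h : x ∈ QSet) :
    ∃ n, ∀ k, n ≤ k → ofLex x k = ofLex x n := by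
  rcases h with (hmin | hpred) | (hmax | hsucc)
  · have : x = cbot := le_antisymm (hmin (cbot_le x)) (cbot_le x)
    subst this; exact ⟨0, fun _ _ => rfl⟩
  · exact eventually_const_of_right hpred
  · have : x = ctop := le_antisymm (le_ctop x) (hmax (le_ctop x))
    subst this; exact ⟨0, fun _ _ => rfl⟩
  · exact eventually_const_of_left hsucc

theorem evconst_of_left_D {u : DSpace} (h : ∃ v, u ⋖ v) :
    (∃ n, ∀ k, n ≤ k → ofLex (pi1 u) k = ofLex (pi1 u) n) ∧
    (∃ n, ∀ k, n ≤ k → ofLex (pi2 u) k = ofLex (pi2 u) n) := by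
  rcases h with ⟨v, hv⟩
  rcases covD_iff.1 hv with ⟨_, hL⟩ | ⟨hL, hc, _⟩
  · have hq : pi1 u ∈ QSet :=
      mem_q_of_pi2_ne (left_endpoint_ne_cbot ⟨_, hL⟩)
    exact ⟨evconst_of_QSet hq, eventually_const_of_left ⟨_, hL⟩⟩
  · refine ⟨eventually_const_of_left ⟨_, hL⟩, ?_⟩
    rw [hc]; exact ⟨0, fun _ _ => rfl⟩

/-! ### generic lemmas about the suborder of left endpoints of jumps -/

section Jumps
variable {L : Type*} [LinearOrder L]

theorem jdense (hdense : ∀ u v : L, u < v → ∃ c d : L, c ⋖ d ∧ u ≤ c ∧ d ≤ v)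
    (hLR : ∀ z : L, (∃ d, z ⋖ d) → (∃ c, c ⋖ z) → False) :
    DenselyOrdered {c : L // ∃ d, c ⋖ d} := by
  constructor
  rintro ⟨c, hcex⟩ ⟨c', hc'ex⟩ h
  rw [Subtype.mk_lt_mk] at h
  obtain ⟨d, hcd⟩ := hcex
  have hdc' : d ≤ c' := not_lt.1 fun hlt => hcd.2 h hlt
  have hne : d ≠ c' := fun he => hLR c' hc'ex ⟨c, he ▸ hcd⟩
  rcases hdense d c' (lt_of_le_of_ne hdc' hne) with ⟨e, f, hef, hde, hfc'⟩
  refine ⟨⟨e, f, hef⟩, Subtype.mk_lt_mk.2 (lt_of_lt_of_le hcd.lt hde),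
    Subtype.mk_lt_mk.2 (lt_of_lt_of_le hef.lt hfc')⟩

theorem jnomin (hdense : ∀ u v : L, u < v → ∃ c d : L, c ⋖ d ∧ u ≤ c ∧ d ≤ v)
    (bot : L) (hbot : ∀ x, bot ≤ x) (hbotL : ∀ d, bot ⋖ d → False) :
    NoMinOrder {c : L // ∃ d, c ⋖ d} := by
  constructor
  rintro ⟨c, hcex⟩
  obtain ⟨d, hcd⟩ := hcex
  have hbc : bot < c := lt_of_le_of_ne (hbot c) fun he => hbotL d (by rw [he]; exact hcd)
  rcases hdense bot c hbc with ⟨e, f, hef, _, hfc⟩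
  exact ⟨⟨e, ⟨f, hef⟩⟩, Subtype.mk_lt_mk.2 (lt_of_lt_of_le hef.lt hfc)⟩

theorem jnomax (hdense : ∀ u v : L, u < v → ∃ c d : L, c ⋖ d ∧ u ≤ c ∧ d ≤ v)
    (top : L) (htop : ∀ x, x ≤ top) (htopR : ∀ c, c ⋖ top → False) :
    NoMaxOrder {c : L // ∃ d, c ⋖ d} := by
  constructor
  rintro ⟨c, hcex⟩
  obtain ⟨d, hcd⟩ := hcex
  have hdt : d < top := lt_of_le_of_ne (htop d) fun he => htopR c (he ▸ hcd)
  rcases hdense d top hdt with ⟨e, f, hef, hde, _⟩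
  exact ⟨⟨e, f, hef⟩, Subtype.mk_lt_mk.2 (lt_of_lt_of_le hcd.lt hde)⟩

end Jumps

abbrev JC := {c : CantorLex // ∃ d, c ⋖ d}
abbrev JD := {u : DSpace // ∃ v, u ⋖ v}

/-- the Q-set of D -/
def QD : Set DSpace :=
  {p | (IsMin p ∨ ∃ q, q ⋖ p) ∨ (IsMax p ∨ ∃ q, p ⋖ q)}

theorem mem_QD_left {u : DSpace} (h : ∃ v, u ⋖ v) : u ∈ QD := Or.inr (Or.inr h)
theorem mem_QD_right {u : DSpace} (h : ∃ c, c ⋖ u) : u ∈ QD := Or.inl (Or.inr h)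
theorem mem_QSet_left {x : CantorLex} (h : ∃ d, x ⋖ d) : x ∈ QSet := Or.inr (Or.inr h)
theorem mem_QSet_right {x : CantorLex} (h : ∃ c, c ⋖ x) : x ∈ QSet := Or.inl (Or.inr h)
theorem cbot_mem_QSet : cbot ∈ QSet := Or.inl (Or.inl (isMin_iff.2 rfl))
theorem ctop_mem_QSet : ctop ∈ QSet := Or.inr (Or.inl (isMax_iff.2 rfl))
theorem dbot_mem_QD : dbot ∈ QD := Or.inl (Or.inl (isMin_iff_D.2 rfl))
theorem dtop_mem_QD : dtop ∈ QD := Or.inr (Or.inl (isMax_iff_D.2 rfl))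

/-- successor of a left endpoint -/
noncomputable def succC (j : JC) : CantorLex := j.prop.choose
theorem succC_spec (j : JC) : j.val ⋖ succC j := j.prop.choose_spec

theorem succC_le_of_lt {j j' : JC} (h : j < j') : succC j ≤ j'.val :=
  not_lt.1 fun hlt => (succC_spec j).2 (Subtype.coe_lt_coe.2 h) hlt

theorem succC_lt_of_lt {j j' : JC} (h : j < j') : succC j < j'.val :=
  lt_of_le_of_ne (succC_le_of_lt h)
    (fun he => not_left_and_right j'.prop ⟨j.val, he ▸ succC_spec j⟩)

theorem lt_succC (j : JC) : j.val < succC j := (succC_spec j).lt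

theorem succC_mem_QSet (j : JC) : succC j ∈ QSet := mem_QSet_right ⟨j.val, succC_spec j⟩

noncomputable def succD (j : JD) : DSpace := j.prop.choose
theorem succD_spec (j : JD) : j.val ⋖ succD j := j.prop.choose_spec
theorem dbot_lt_dtop : dbot < dtop :=
  lt_of_le_of_ne (dbot_le dtop) (fun he => cbot_ne_ctop (congrArg pi1 he))

open scoped Classical in
noncomputable def skel (ψ : JD ≃o JC) (u : ↥QD) : ↥QSet :=
  if h : ∃ v, u.val ⋖ v then
    ⟨(ψ ⟨u.val, h⟩).val, mem_QSet_left (ψ ⟨u.val, h⟩).prop⟩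
  else if h' : ∃ c, c ⋖ u.val then
    ⟨succC (ψ ⟨h'.choose, ⟨u.val, h'.choose_spec⟩⟩),
      succC_mem_QSet _⟩
  else if h'' : IsMin u.val then ⟨cbot, cbot_mem_QSet⟩
  else ⟨ctop, ctop_mem_QSet⟩

theorem isMax_of_else {u : ↥QD} (h : ¬∃ v, u.val ⋖ v) (h' : ¬∃ c, c ⋖ u.val)
    (h'' : ¬IsMin u.val) : IsMax u.val := by
  rcases u.prop with (hm | hp) | (hM | hs)
  · exact absurd hm h''
  · exact absurd hp h'
  · exact hM
  · exact absurd hs h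

/-- values of skel are never cbot except in the IsMin branch, etc. -/
theorem skel_strictMono (ψ : JD ≃o JC) : StrictMono (skel ψ) := by
  intro u v huv
  classical
  have huv' : u.val < v.val := Subtype.coe_lt_coe.2 huv
  unfold skel
  by_cases h1 : ∃ w, u.val ⋖ w
  · rw [dif_pos h1]
    by_cases g1 : ∃ w, v.val ⋖ w
    · -- L L
      rw [dif_pos g1]
      apply Subtype.mk_lt_mk.2
      exact Subtype.coe_lt_coe.2 (ψ.lt_iff_lt.2 (Subtype.mk_lt_mk.2 huv'))
    · rw [dif_neg g1]
      by_cases g2 : ∃ c, c ⋖ v.val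
      · -- L R
        rw [dif_pos g2]
        apply Subtype.mk_lt_mk.2
        set cv := g2.choose with hcv
        have hcvv : cv ⋖ v.val := g2.choose_spec
        set jv : JD := ⟨cv, ⟨v.val, hcvv⟩⟩ with hjv
        set ju : JD := ⟨u.val, h1⟩ with hju
        rcases lt_trichotomy u.val cv with hlt | heq | hgt
        · have : ψ ju < ψ jv := ψ.lt_iff_lt.2 (Subtype.mk_lt_mk.2 hlt)
          exact lt_trans (Subtype.coe_lt_coe.2 this) (lt_succC _)
        · have : ju = jv := Subtype.ext heq
          rw [this]
          exact lt_succC _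
        · exact absurd huv' (hcvv.2 hgt)
      · -- L vs extreme
        rw [dif_neg g2]
        by_cases g3 : IsMin v.val
        · -- v is min but u < v: impossible
          exact absurd huv' (not_lt.2 (g3 (le_of_lt huv')))
        · -- v = top
          rw [dif_neg g3]
          apply Subtype.mk_lt_mk.2
          refine lt_of_le_of_ne (le_ctop _) (fun he => ?_)
          obtain ⟨w, h0⟩ := (ψ ⟨u.val, h1⟩).prop
          rw [he] at h0
          exact ctop_not_left h0
  · rw [dif_neg h1]
    by_cases h2 : ∃ c, c ⋖ u.val
    · rw [dif_pos h2]
      set cu := h2.choose with hcu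
      have hcuu : cu ⋖ u.val := h2.choose_spec
      set ju : JD := ⟨cu, ⟨u.val, hcuu⟩⟩ with hju
      by_cases g1 : ∃ w, v.val ⋖ w
      · -- R L
        rw [dif_pos g1]
        apply Subtype.mk_lt_mk.2
        set jv : JD := ⟨v.val, g1⟩ with hjv
        have hj : ju < jv := Subtype.mk_lt_mk.2 (lt_trans hcuu.lt huv')
        exact succC_lt_of_lt (ψ.lt_iff_lt.2 hj)
      · rw [dif_neg g1]
        by_cases g2 : ∃ c, c ⋖ v.val
        · -- R R
          rw [dif_pos g2]
          apply Subtype.mk_lt_mk.2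
          set cv := g2.choose with hcv
          have hcvv : cv ⋖ v.val := g2.choose_spec
          set jv : JD := ⟨cv, ⟨v.val, hcvv⟩⟩ with hjv
          have hcc : cu < cv := by
            rcases lt_trichotomy cu cv with h | h | h
            · exact h
            · exfalso
              -- cu = cv: then u.val = v.val by right-uniqueness
              have := covby_right_unique (h ▸ hcuu) hcvv
              exact absurd (this ▸ huv') (lt_irrefl _)
            · exfalso
              -- cv < cu < u < v but cv ⋖ v, so u between? cu < u ≤ cv impossible...
              have hucv : u.val ≤ cv := not_lt.1 fun hl => hcvv.2 hl huv'
              exact absurd (lt_of_le_of_lt hucv h) (not_lt.2 hcuu.lt.le)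
          have hj : ψ ju < ψ jv := ψ.lt_iff_lt.2 (Subtype.mk_lt_mk.2 hcc)
          exact lt_of_le_of_lt (succC_le_of_lt hj) (lt_succC _)
        · rw [dif_neg g2]
          by_cases g3 : IsMin v.val
          · exact absurd huv' (not_lt.2 (g3 (le_of_lt huv')))
          · rw [dif_neg g3]
            apply Subtype.mk_lt_mk.2
            refine lt_of_le_of_ne (le_ctop _) (fun he => ?_)
            have h0 := succC_spec (ψ ju)
            rw [he] at h0
            exact ctop_not_right h0
    · rw [dif_neg h2]
      by_cases h3 : IsMin u.val
      · -- u = bot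
        rw [dif_pos h3]
        by_cases g1 : ∃ w, v.val ⋖ w
        · rw [dif_pos g1]
          apply Subtype.mk_lt_mk.2
          refine lt_of_le_of_ne (cbot_le _) (fun he => ?_)
          obtain ⟨w, h0⟩ := (ψ ⟨v.val, g1⟩).prop
          rw [← he] at h0
          exact cbot_not_left h0
        · rw [dif_neg g1]
          by_cases g2 : ∃ c, c ⋖ v.val
          · rw [dif_pos g2]
            apply Subtype.mk_lt_mk.2
            refine lt_of_le_of_ne (cbot_le _) (fun he => ?_)
            have h0 := succC_spec (ψ ⟨g2.choose, ⟨v.val, g2.choose_spec⟩⟩)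
            rw [← he] at h0
            exact cbot_not_right h0
          · rw [dif_neg g2]
            by_cases g3 : IsMin v.val
            · exact absurd huv' (not_lt.2 (g3 (le_of_lt huv')))
            · rw [dif_neg g3]
              exact Subtype.mk_lt_mk.2 cbot_lt_ctop
      · -- u = top: impossible since u < v
        exfalso
        exact absurd huv' (not_lt.2 ((isMax_of_else h1 h2 h3) (le_of_lt huv')))

theorem skel_surjective (ψ : JD ≃o JC) : Function.Surjective (skel ψ) := by
  classical
  intro q
  rcases q.prop with (hmin | hpred) | (hmax | hsucc)
  · -- q = cbot
    have hq : q.val = cbot := isMin_iff.1 hmin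
    refine ⟨⟨dbot, dbot_mem_QD⟩, ?_⟩
    unfold skel
    rw [dif_neg (fun h => dbot_not_left h.choose_spec),
        dif_neg (fun h => dbot_not_right h.choose_spec),
        dif_pos (isMin_iff_D.2 rfl)]
    exact Subtype.ext hq.symm
  · -- q is a right endpoint
    obtain ⟨c', hc'⟩ := hpred
    set j' : JC := ⟨c', ⟨q.val, hc'⟩⟩ with hj'
    set j : JD := ψ.symm j' with hj
    set u : DSpace := succD j with hu
    have hju : j.val ⋖ u := succD_spec j
    refine ⟨⟨u, mem_QD_right ⟨j.val, hju⟩⟩, ?_⟩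
    unfold skel
    rw [dif_neg (fun h => not_left_and_right_D h ⟨j.val, hju⟩)]
    have hex : ∃ c, c ⋖ u := ⟨j.val, hju⟩
    rw [dif_pos hex]
    have hch : hex.choose = j.val := covby_left_unique hex.choose_spec hju
    have harg : (⟨hex.choose, ⟨u, hex.choose_spec⟩⟩ : JD) = j := Subtype.ext hch
    apply Subtype.ext
    show succC (ψ ⟨hex.choose, ⟨u, hex.choose_spec⟩⟩) = q.val
    rw [harg, hj, OrderIso.apply_symm_apply]
    exact covby_right_unique (succC_spec j') hc'
  · have hq : q.val = ctop := isMax_iff.1 hmax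
    refine ⟨⟨dtop, dtop_mem_QD⟩, ?_⟩
    unfold skel
    rw [dif_neg (fun h => dtop_not_left h.choose_spec),
        dif_neg (fun h => dtop_not_right h.choose_spec)]
    rw [dif_neg (fun h : IsMin dtop =>
      absurd (isMin_iff_D.1 h ▸ dbot_lt_dtop) (lt_irrefl dbot))]
    exact Subtype.ext hq.symm
  · -- q is a left endpoint
    set j' : JC := ⟨q.val, hsucc⟩ with hj'
    set j : JD := ψ.symm j' with hj
    refine ⟨⟨j.val, mem_QD_left j.prop⟩, ?_⟩
    unfold skel
    rw [dif_pos j.prop]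
    apply Subtype.ext
    show (ψ ⟨j.val, j.prop⟩).val = q.val
    have harg : (⟨j.val, j.prop⟩ : JD) = j := Subtype.ext rfl
    rw [harg, hj, OrderIso.apply_symm_apply]

variable {L M : Type*} [LinearOrder L] [LinearOrder M] {A : Set L} {B : Set M}

/-- every element is the LUB of the elements of A below it -/
theorem isLUB_below (hdL : ∀ u v : L, u < v → ∃ c d, c ∈ A ∧ d ∈ A ∧ c ⋖ d ∧ u ≤ c ∧ d ≤ v)
    (u : L) : IsLUB {a | a ∈ A ∧ a ≤ u} u := by
  constructor
  · exact fun a ha => ha.2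
  · intro b hb
    by_contra hc
    have hbu : b < u := lt_of_not_ge hc
    rcases hdL b u hbu with ⟨c, d, hcA, hdA, hcd, hbc, hdu⟩
    have hcb : c ≤ b := hb ⟨hcA, le_trans hcd.lt.le hdu⟩
    have hdb : d ≤ b := hb ⟨hdA, hdu⟩
    exact absurd (lt_of_lt_of_le hcd.lt hdb) (not_lt.2 hbc)

/-- the canonical monotone extension -/
noncomputable def extFun (supM : ∀ S : Set M, ∃ u, IsLUB S u) (φ : ↥A ≃o ↥B) (u : L) : M :=
  (supM {m | ∃ a : ↥A, (a : L) ≤ u ∧ m = (φ a : M)}).choose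

theorem extFun_isLUB (supM : ∀ S : Set M, ∃ u, IsLUB S u) (φ : ↥A ≃o ↥B) (u : L) :
    IsLUB {m | ∃ a : ↥A, (a : L) ≤ u ∧ m = (φ a : M)} (extFun supM φ u) :=
  (supM _).choose_spec

theorem extFun_image (supM : ∀ S : Set M, ∃ u, IsLUB S u)
    (hdL : ∀ u v : L, u < v → ∃ c d, c ∈ A ∧ d ∈ A ∧ c ⋖ d ∧ u ≤ c ∧ d ≤ v)
    (φ : ↥A ≃o ↥B) (u : L) :
    {m | m ∈ B ∧ m ≤ extFun supM φ u} = {m | ∃ a : ↥A, (a : L) ≤ u ∧ m = (φ a : M)} := by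
  ext m
  constructor
  · rintro ⟨hmB, hm⟩
    set a' := φ.symm ⟨m, hmB⟩ with ha'
    refine ⟨a', ?_, by simp [ha']⟩
    by_contra hc
    have hua : u < (a' : L) := lt_of_not_ge hc
    rcases hdL u (a' : L) hua with ⟨c, d, hcA, hdA, hcd, huc, hda⟩
    have h1 : extFun supM φ u ≤ (φ ⟨c, hcA⟩ : M) := by
      apply (extFun_isLUB supM φ u).2
      rintro y ⟨a, hau, rfl⟩
      have : (a : L) ≤ c := le_trans hau huc
      exact φ.le_iff_le.2 (by exact_mod_cast this)
    have h2 : (φ ⟨c, hcA⟩ : M) < (φ ⟨d, hdA⟩ : M) := by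
      have : (⟨c, hcA⟩ : ↥A) < ⟨d, hdA⟩ := Subtype.mk_lt_mk.2 hcd.lt
      exact_mod_cast φ.lt_iff_lt.2 this
    have h3 : (φ ⟨d, hdA⟩ : M) ≤ m := by
      have : (⟨d, hdA⟩ : ↥A) ≤ a' := by exact_mod_cast hda
      have := φ.le_iff_le.2 this
      simpa [ha'] using Subtype.coe_le_coe.2 this
    exact absurd (lt_of_le_of_lt (le_trans hm h1) (lt_of_lt_of_le h2 h3)) (lt_irrefl m)
  · rintro ⟨a, hau, rfl⟩
    exact ⟨(φ a).prop, (extFun_isLUB supM φ u).1 ⟨a, hau, rfl⟩⟩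

theorem extFun_mono (supM : ∀ S : Set M, ∃ u, IsLUB S u) (φ : ↥A ≃o ↥B) :
    Monotone (extFun supM φ) := by
  intro u v huv
  apply (extFun_isLUB supM φ u).2
  rintro y ⟨a, hau, rfl⟩
  exact (extFun_isLUB supM φ v).1 ⟨a, le_trans hau huv, rfl⟩

theorem ext_left_inv (supL : ∀ S : Set L, ∃ u, IsLUB S u) (supM : ∀ S : Set M, ∃ u, IsLUB S u)
    (hdL : ∀ u v : L, u < v → ∃ c d, c ∈ A ∧ d ∈ A ∧ c ⋖ d ∧ u ≤ c ∧ d ≤ v)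
    (φ : ↥A ≃o ↥B) (u : L) :
    extFun supL φ.symm (extFun supM φ u) = u := by
  have h1 : IsLUB {l | ∃ b : ↥B, (b : M) ≤ extFun supM φ u ∧ l = (φ.symm b : L)}
      (extFun supL φ.symm (extFun supM φ u)) := extFun_isLUB supL φ.symm _
  have h2 : {l | ∃ b : ↥B, (b : M) ≤ extFun supM φ u ∧ l = (φ.symm b : L)} =
      {a | a ∈ A ∧ a ≤ u} := by
    ext l
    constructor
    · rintro ⟨b, hb, rfl⟩
      have hbmem : (b : M) ∈ {m | m ∈ B ∧ m ≤ extFun supM φ u} := ⟨b.prop, hb⟩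
      rw [extFun_image supM hdL φ] at hbmem
      rcases hbmem with ⟨a, hau, hab⟩
      have hba : b = φ a := Subtype.ext hab
      have : φ.symm b = a := by rw [hba, OrderIso.symm_apply_apply]
      rw [this]
      exact ⟨a.prop, hau⟩
    · rintro ⟨hlA, hlu⟩
      refine ⟨φ ⟨l, hlA⟩, ?_, by simp⟩
      have : (φ ⟨l, hlA⟩ : M) ∈ {m | m ∈ B ∧ m ≤ extFun supM φ u} := by
        rw [extFun_image supM hdL φ]
        exact ⟨⟨l, hlA⟩, hlu, rfl⟩
      exact this.2
  rw [h2] at h1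
  exact IsLUB.unique h1 (isLUB_below hdL u)

/-- main abstract extension theorem -/
theorem ext_orderIso (supL : ∀ S : Set L, ∃ u, IsLUB S u) (supM : ∀ S : Set M, ∃ u, IsLUB S u)
    (hdL : ∀ u v : L, u < v → ∃ c d, c ∈ A ∧ d ∈ A ∧ c ⋖ d ∧ u ≤ c ∧ d ≤ v)
    (hdM : ∀ u v : M, u < v → ∃ c d, c ∈ B ∧ d ∈ B ∧ c ⋖ d ∧ u ≤ c ∧ d ≤ v)
    (φ : ↥A ≃o ↥B) : Nonempty (L ≃o M) := by
  refine ⟨{ toFun := extFun supM φ, invFun := extFun supL φ.symm,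
            left_inv := ext_left_inv supL supM hdL φ,
            right_inv := ?_, map_rel_iff' := ?_ }⟩
  · intro v
    have := ext_left_inv supM supL hdM φ.symm v
    rwa [OrderIso.symm_symm] at this
  · intro u v
    constructor
    · intro h
      have h' : extFun supM φ u ≤ extFun supM φ v := h
      have := extFun_mono supL φ.symm h'
      rwa [ext_left_inv supL supM hdL φ u, ext_left_inv supL supM hdL φ v] at this
    · exact fun h => extFun_mono supM φ h



theorem countable_JC : Countable JC := by
  have hinj : Function.Injective (fun j : JC => encQ j.val (eventually_const_of_left j.prop)) := by
    intro j j' h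
    exact Subtype.ext (encQ_inj _ _ h)
  exact hinj.countable

theorem countable_JD : Countable JD := by
  have hinj : Function.Injective (fun j : JD =>
      (encQ (pi1 j.val) (evconst_of_left_D j.prop).1,
       encQ (pi2 j.val) (evconst_of_left_D j.prop).2)) := by
    intro j j' h
    rw [Prod.mk.injEq] at h
    exact Subtype.ext (dext (encQ_inj _ _ h.1) (encQ_inj _ _ h.2))
  exact hinj.countable

theorem nonempty_JC : Nonempty JC := ⟨⟨leftJ cbot 0, ⟨rightJ cbot 0, leftJ_covby cbot 0⟩⟩⟩

theorem nonempty_JD : Nonempty JD := by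
  refine ⟨⟨⟨toLex (leftJ cbot 0, ctop), fiber_mem (mem_QSet_left ⟨_, leftJ_covby cbot 0⟩) ctop⟩,
    ⟨⟨toLex (rightJ cbot 0, cbot), base_mem _⟩, ?_⟩⟩⟩
  exact covD_iff.2 (Or.inr ⟨leftJ_covby cbot 0, rfl, rfl⟩)

theorem denseJC : DenselyOrdered JC :=
  jdense (fun _ _ h => dense_jumpC h) (fun _ h1 h2 => not_left_and_right h1 h2)
theorem nominJC : NoMinOrder JC :=
  jnomin (fun _ _ h => dense_jumpC h) cbot cbot_le (fun _ h => cbot_not_left h)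
theorem nomaxJC : NoMaxOrder JC :=
  jnomax (fun _ _ h => dense_jumpC h) ctop le_ctop (fun _ h => ctop_not_right h)
theorem denseJD : DenselyOrdered JD :=
  jdense (fun _ _ h => dense_jumpD h) (fun _ h1 h2 => not_left_and_right_D h1 h2)
theorem nominJD : NoMinOrder JD :=
  jnomin (fun _ _ h => dense_jumpD h) dbot dbot_le (fun _ h => dbot_not_left h)
theorem nomaxJD : NoMaxOrder JD :=
  jnomax (fun _ _ h => dense_jumpD h) dtop le_dtop (fun _ h => dtop_not_right h)

theorem exists_skeleton : Nonempty (↥QD ≃o ↥QSet) := by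
  obtain ⟨ψ⟩ := @Order.iso_of_countable_dense JD JC _ _ countable_JD denseJD nominJD nomaxJD
    nonempty_JD countable_JC denseJC nominJC nomaxJC nonempty_JC
  exact ⟨StrictMono.orderIsoOfSurjective _ (skel_strictMono ψ) (skel_surjective ψ)⟩

theorem main_iso : Nonempty (DSpace ≃o CantorLex) := by
  obtain ⟨φ⟩ := exists_skeleton
  refine ext_orderIso exists_isLUB_D (fun S => ⟨lubC S, isLUB_lubC S⟩) ?_ ?_ φ
  · intro u v h
    rcases dense_jumpD h with ⟨c, d, hcd, huc, hdv⟩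
    exact ⟨c, d, mem_QD_left ⟨d, hcd⟩, mem_QD_right ⟨c, hcd⟩, hcd, huc, hdv⟩
  · intro u v h
    rcases dense_jumpC h with ⟨c, d, hcd, huc, hdv⟩
    exact ⟨c, d, mem_QSet_left ⟨d, hcd⟩, mem_QSet_right ⟨c, hcd⟩, hcd, huc, hdv⟩

instance : OrderTopology CantorLex := ⟨rfl⟩
instance : OrderTopology DSpace := ⟨rfl⟩

open Set TopologicalSpace

theorem pi1_continuous : Continuous (fun d : DSpace => (ofLex d.1).1) := by
  apply continuous_generateFrom_iff.mpr
  rintro s ⟨a, rfl | rfl⟩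
  · show IsOpen ((fun d : DSpace => (ofLex d.1).1) ⁻¹' Ioi a)
    by_cases hq : a ∈ QSet
    · have : (fun d : DSpace => (ofLex d.1).1) ⁻¹' Ioi a =
          Ioi (⟨toLex (a, ctop), fiber_mem hq ctop⟩ : DSpace) := by
        ext d
        simp only [mem_preimage, mem_Ioi]
        constructor
        · intro h; exact dlt_iff.2 (Or.inl h)
        · intro h
          rcases dlt_iff.1 h with h | ⟨_, h2⟩
          · exact h
          · exact absurd h2 (not_lt.2 (le_ctop _))
      rw [this]; exact isOpen_Ioi
    · have : (fun d : DSpace => (ofLex d.1).1) ⁻¹' Ioi a =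
          Ioi (⟨toLex (a, cbot), base_mem a⟩ : DSpace) := by
        ext d
        simp only [mem_preimage, mem_Ioi]
        constructor
        · intro h; exact dlt_iff.2 (Or.inl h)
        · intro h
          rcases dlt_iff.1 h with h | ⟨h1, h2⟩
          · exact h
          · exfalso
            have : pi2 d = cbot := pi2_eq_cbot (by rw [← h1]; exact hq)
            rw [this] at h2; exact absurd h2 (lt_irrefl _)
      rw [this]; exact isOpen_Ioi
  · show IsOpen ((fun d : DSpace => (ofLex d.1).1) ⁻¹' Iio a)
    have : (fun d : DSpace => (ofLex d.1).1) ⁻¹' Iio a =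
        Iio (⟨toLex (a, cbot), base_mem a⟩ : DSpace) := by
      ext d
      simp only [mem_preimage, mem_Iio]
      constructor
      · intro h; exact dlt_iff.2 (Or.inl h)
      · intro h
        rcases dlt_iff.1 h with h | ⟨_, h2⟩
        · exact h
        · exact absurd h2 (not_lt.2 (cbot_le _))
    rw [this]; exact isOpen_Iio

open scoped Classical in
noncomputable def secD (x : CantorLex) : DSpace :=
  if h : x ∈ QSet ∧ ¬(IsMax x ∨ ∃ d, x ⋖ d) then ⟨toLex (x, ctop), fiber_mem h.1 ctop⟩
  else ⟨toLex (x, cbot), base_mem x⟩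

theorem secD_pi1 (x : CantorLex) : pi1 (secD x) = x := by
  unfold secD; split_ifs <;> rfl

theorem secD_continuous : Continuous secD := by
  classical
  apply continuous_generateFrom_iff.mpr
  rintro s ⟨d0, rfl | rfl⟩
  · show IsOpen (secD ⁻¹' Ioi d0)
    by_cases hc : d0 < secD (pi1 d0)
    · have hpre : secD ⁻¹' Ioi d0 = Ici (pi1 d0) := by
        ext x
        simp only [mem_preimage, mem_Ioi, mem_Ici]
        constructor
        · intro h
          rcases dlt_iff.1 h with h | ⟨h1, _⟩
          · rw [secD_pi1] at h; exact h.le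
          · rw [secD_pi1] at h1; exact h1.le
        · intro h
          rcases eq_or_lt_of_le h with heq | hlt
          · rw [← heq]; exact hc
          · exact dlt_iff.2 (Or.inl (by rw [secD_pi1]; exact hlt))
      rw [hpre]
      -- openness of Ici: pi1 d0 is min or has a predecessor
      have h2 : pi2 d0 < pi2 (secD (pi1 d0)) := by
        rcases dlt_iff.1 hc with h | ⟨_, h2⟩
        · rw [secD_pi1] at h; exact absurd h (lt_irrefl _)
        · exact h2
      have hbranch : pi1 d0 ∈ QSet ∧ ¬(IsMax (pi1 d0) ∨ ∃ d, pi1 d0 ⋖ d) := by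
        by_contra hb
        have : secD (pi1 d0) = ⟨toLex (pi1 d0, cbot), base_mem _⟩ := by
          unfold secD; rw [dif_neg hb]
        rw [this] at h2
        exact absurd h2 (not_lt.2 (cbot_le _))
      rcases hbranch.1 with (hmin | hpred) | (hmax | hsucc)
      · have : Ici (pi1 d0) = univ := by
          ext z; simp only [mem_Ici, mem_univ, iff_true]
          rw [isMin_iff.1 hmin]; exact cbot_le z
        rw [this]; exact isOpen_univ
      · obtain ⟨p, hp⟩ := hpred
        have : Ici (pi1 d0) = Ioi p := by
          ext z; simp only [mem_Ici, mem_Ioi]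
          exact ⟨fun h => lt_of_lt_of_le hp.lt h, fun h => not_lt.1 fun hl => hp.2 h hl⟩
        rw [this]; exact isOpen_Ioi
      · exact absurd (Or.inl hmax) hbranch.2
      · exact absurd (Or.inr hsucc) hbranch.2
    · have hpre : secD ⁻¹' Ioi d0 = Ioi (pi1 d0) := by
        ext x
        simp only [mem_preimage, mem_Ioi]
        constructor
        · intro h
          rcases dlt_iff.1 h with h | ⟨h1, h2⟩
          · rw [secD_pi1] at h; exact h
          · exfalso
            rw [secD_pi1] at h1
            rw [← h1] at h
            exact hc h
        · intro h
          exact dlt_iff.2 (Or.inl (by rw [secD_pi1]; exact h))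
      rw [hpre]; exact isOpen_Ioi
  · show IsOpen (secD ⁻¹' Iio d0)
    by_cases hc : secD (pi1 d0) < d0
    · have hpre : secD ⁻¹' Iio d0 = Iic (pi1 d0) := by
        ext x
        simp only [mem_preimage, mem_Iio, mem_Iic]
        constructor
        · intro h
          rcases dlt_iff.1 h with h | ⟨h1, _⟩
          · rw [secD_pi1] at h; exact h.le
          · rw [secD_pi1] at h1; exact h1.le
        · intro h
          rcases eq_or_lt_of_le h with heq | hlt
          · rw [heq]; exact hc
          · exact dlt_iff.2 (Or.inl (by rw [secD_pi1]; exact hlt))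
      rw [hpre]
      have h2 : pi2 (secD (pi1 d0)) < pi2 d0 := by
        rcases dlt_iff.1 hc with h | ⟨_, h2⟩
        · rw [secD_pi1] at h; exact absurd h (lt_irrefl _)
        · exact h2
      have hq : pi1 d0 ∈ QSet := by
        apply mem_q_of_pi2_ne
        intro hb
        rw [hb] at h2
        exact absurd h2 (not_lt.2 (cbot_le _))
      have hbranch : ¬(pi1 d0 ∈ QSet ∧ ¬(IsMax (pi1 d0) ∨ ∃ d, pi1 d0 ⋖ d)) := by
        intro hb
        have : secD (pi1 d0) = ⟨toLex (pi1 d0, ctop), fiber_mem hb.1 ctop⟩ := by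
          unfold secD; rw [dif_pos hb]
        rw [this] at h2
        exact absurd h2 (not_lt.2 (le_ctop _))
      have hright : IsMax (pi1 d0) ∨ ∃ d, pi1 d0 ⋖ d := by
        by_contra hb
        exact hbranch ⟨hq, hb⟩
      rcases hright with hmax | ⟨s, hs⟩
      · have : Iic (pi1 d0) = univ := by
          ext z; simp only [mem_Iic, mem_univ, iff_true]
          rw [isMax_iff.1 hmax]; exact le_ctop z
        rw [this]; exact isOpen_univ
      · have : Iic (pi1 d0) = Iio s := by
          ext z; simp only [mem_Iic, mem_Iio]
          exact ⟨fun h => lt_of_le_of_lt h hs.lt, fun h => not_lt.1 fun hl => hs.2 hl h⟩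
        rw [this]; exact isOpen_Iio
    · have hpre : secD ⁻¹' Iio d0 = Iio (pi1 d0) := by
        ext x
        simp only [mem_preimage, mem_Iio]
        constructor
        · intro h
          rcases dlt_iff.1 h with h | ⟨h1, h2⟩
          · rw [secD_pi1] at h; exact h
          · exfalso
            rw [secD_pi1] at h1
            rw [h1] at h
            exact hc h
        · intro h
          exact dlt_iff.2 (Or.inl (by rw [secD_pi1]; exact h))
      rw [hpre]; exact isOpen_Iio

theorem secD_section : (fun d : DSpace => (ofLex d.1).1) ∘ secD = id := by
  funext x
  exact secD_pi1 x


end CantorAux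

/-- `D` is order isomorphic to the lexicographically ordered Cantor set
`C`, and the first-coordinate projection `π : D → C` is a continuous order-preserving
retraction: it admits a continuous right inverse. -/
theorem dspace_iso_cantor_and_projection_retraction :
    Nonempty (DSpace ≃o CantorLex) ∧
    Continuous (fun d : DSpace => (ofLex d.1).1) ∧
    Monotone (fun d : DSpace => (ofLex d.1).1) ∧
    ∃ i : CantorLex → DSpace, Continuous i ∧
      (fun d : DSpace => (ofLex d.1).1) ∘ i = id := by
  exact ⟨CantorAux.main_iso, CantorAux.pi1_continuous,
    fun _ _ h => CantorAux.pi1_mono h,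
    CantorAux.secD, CantorAux.secD_continuous, CantorAux.secD_section⟩
end

section
/- The ordinal space ω₂+1, i.e. the set of all ordinals ≤ ω₂ with the order topology, is not Valdivia compact. -/
universe u

/-- A compact space is Valdivia compact if it embeds into some Tychonoff cube `[0,1]^κ`
in such a way that its image is the closure of the intersection of the image with the
Σ-product (the points of countable support). -/
def IsValdiviaCompact (X : Type u) [TopologicalSpace X] : Prop :=
  CompactSpace X ∧ T2Space X ∧
    ∃ (κ : Type u) (e : X → κ → ↥unitInterval), Topology.IsEmbedding e ∧
      Set.range e = closure (Set.range e ∩ {x | {a | x a ≠ 0}.Countable})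

open Set Topology Cardinal Ordinal Filter

namespace Omega2V

noncomputable section

abbrev OO : Ordinal.{u} := (Cardinal.aleph 2).ord

abbrev XX : Type (u + 1) := ↥(Set.Iic OO.{u})

abbrev tp : XX.{u} := ⟨OO, Set.self_mem_Iic⟩

lemma limitO : Order.IsSuccLimit OO.{u} := Cardinal.isSuccLimit_ord (aleph0_le_aleph 2)

lemma regO : (Cardinal.aleph.{u} 2).IsRegular := by
  have h2 : (2 : Ordinal) = Order.succ 1 := by
    rw [← Ordinal.add_one_eq_succ, one_add_one_eq_two]
  rw [h2]
  exact Cardinal.isRegular_aleph_succ 1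

lemma tail_mem {V : Set XX.{u}} (hV : V ∈ 𝓝 tp.{u}) :
    ∃ γ < OO.{u}, ∀ x : XX.{u}, γ < x.1 → x ∈ V := by
  rw [nhds_subtype] at hV
  obtain ⟨W, hW, hWV⟩ := Filter.mem_comap.mp hV
  obtain ⟨l, hl, hsub⟩ := exists_Ioc_subset_of_mem_nhds hW ⟨0, limitO.pos⟩
  exact ⟨l, hl, fun x hx => hWV (hsub ⟨hx, x.2⟩)⟩

lemma isolated (γ : Ordinal.{u}) (h : γ + 1 ≤ OO.{u}) :
    IsOpen {(⟨γ + 1, h⟩ : XX.{u})} := by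
  have hset : {(⟨γ + 1, h⟩ : XX.{u})} =
      (Subtype.val ⁻¹' Set.Ioo γ (γ + 1 + 1) : Set XX.{u}) := by
    ext x
    simp only [Set.mem_singleton_iff, Set.mem_preimage, Set.mem_Ioo, Subtype.ext_iff]
    constructor
    · intro hx
      rw [hx]
      exact ⟨by rw [Ordinal.add_one_eq_succ]; exact Order.lt_succ γ,
        by rw [Ordinal.add_one_eq_succ (γ+1)]; exact Order.lt_succ (γ+1)⟩
    · rintro ⟨h1, h2⟩
      rw [Ordinal.add_one_eq_succ (γ+1), Order.lt_succ_iff] at h2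
      have h1' : γ + 1 ≤ x.1 := by
        rw [Ordinal.add_one_eq_succ, Order.succ_le_iff]; exact h1
      exact le_antisymm h2 h1'
  rw [hset]
  exact isOpen_Ioo.preimage continuous_subtype_val

section Main

variable {κ : Type (u + 1)} (e : XX.{u} → κ → ↥unitInterval)

lemma memSigma (hemb : Topology.IsEmbedding e)
    (hrange : Set.range e = closure (Set.range e ∩ {x | {a | x a ≠ 0}.Countable}))
    {x : XX.{u}} (hx : IsOpen {x}) : {a | e x a ≠ 0}.Countable := by
  obtain ⟨U, hU, hUx⟩ := hemb.toIsInducing.isOpen_iff.mp hx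
  have hx1 : e x ∈ closure (Set.range e ∩ {y | {a | y a ≠ 0}.Countable}) := by
    rw [← hrange]; exact Set.mem_range_self x
  have hmemU : e x ∈ U := by
    have : x ∈ e ⁻¹' U := by rw [hUx]; rfl
    exact this
  obtain ⟨z, hzU, hz⟩ := mem_closure_iff.mp hx1 U hU hmemU
  obtain ⟨⟨y, rfl⟩, hzc⟩ := hz
  have : y ∈ e ⁻¹' U := hzU
  rw [hUx] at this
  rw [Set.mem_singleton_iff] at this
  subst this
  exact hzc

lemma eventual (hemb : Topology.IsEmbedding e) (a : κ) :
    ∃ γ < OO.{u}, ∀ x : XX.{u}, γ < x.1 → e x a = e tp a := by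
  have cont : Continuous fun x : XX.{u} => e x a :=
    (continuous_apply a).comp hemb.continuous
  have h1 : ∀ n : ℕ, ∃ γ < OO.{u}, ∀ x : XX.{u}, γ < x.1 →
      dist (e x a) (e tp a) < 1 / (n + 1) := by
    intro n
    have hev : {x : XX.{u} | dist (e x a) (e tp a) < 1 / (n + 1)} ∈ 𝓝 tp.{u} :=
      Metric.tendsto_nhds.mp cont.continuousAt _ (by positivity)
    exact tail_mem hev
  choose γ hγO hγ using h1
  have hbdd : BddAbove (Set.range γ) := ⟨OO, by rintro _ ⟨n, rfl⟩; exact (hγO n).le⟩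
  refine ⟨iSup γ, ?_, fun x hx => ?_⟩
  · refine Cardinal.iSup_lt_ord_lift_of_isRegular regO ?_ hγO
    rw [Cardinal.mk_nat, Cardinal.lift_aleph0, ← Cardinal.aleph_zero]
    exact Cardinal.aleph_lt_aleph.mpr (by norm_num)
  · apply eq_of_forall_dist_le
    intro ε hε
    obtain ⟨n, hn⟩ := exists_nat_one_div_lt hε
    exact ((hγ n x (lt_of_le_of_lt (le_ciSup hbdd n) hx)).trans hn).le

/-- recursively defined supports -/
def SS (pt : Finset κ → ℕ → XX.{u}) : ℕ → Set κ
  | 0 => {a | e tp a ≠ 0}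
  | n + 1 => SS pt n ∪
      ⋃ (F : Finset κ) (_ : ↑F ⊆ SS pt n) (m : ℕ), {a | e (pt F m) a ≠ 0}

lemma finsetSub_countable {s : Set κ} (hs : s.Countable) :
    {F : Finset κ | ↑F ⊆ s}.Countable := by
  refine ((countable_setOf_finite_subset hs).preimage
    (f := fun F : Finset κ => (F : Set κ)) Finset.coe_injective).mono ?_
  intro F hF
  exact ⟨F.finite_toSet, hF⟩

lemma SS_countable (pt : Finset κ → ℕ → XX.{u})
    (h0 : {a | e tp a ≠ 0}.Countable)
    (hpt : ∀ F m, {a | e (pt F m) a ≠ 0}.Countable) :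
    ∀ n, (SS e pt n).Countable := by
  intro n
  induction n with
  | zero => exact h0
  | succ n ih =>
    refine ih.union ?_
    have : (⋃ (F : Finset κ) (_ : ↑F ⊆ SS e pt n) (m : ℕ), {a | e (pt F m) a ≠ 0})
        = ⋃ F ∈ {F : Finset κ | ↑F ⊆ SS e pt n}, ⋃ (m : ℕ), {a | e (pt F m) a ≠ 0} := rfl
    rw [this]
    exact (finsetSub_countable ih).biUnion fun F _ => Set.countable_iUnion fun m => hpt F m

lemma SS_mono (pt : Finset κ → ℕ → XX.{u}) : Monotone (SS e pt) :=
  monotone_nat_of_le_succ fun n => Set.subset_union_left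

lemma not_top_mem_closure {B : Set XX.{u}} (hB : B.Countable)
    (hb : ∀ b ∈ B, b.1 < OO.{u}) : tp.{u} ∉ closure B := by
  rcases B.eq_empty_or_nonempty with rfl | hne
  · simp
  obtain ⟨f, rfl⟩ := hB.exists_eq_range hne
  have hlt : ∀ n : ℕ, (f n).1 < OO.{u} := fun n => hb _ (Set.mem_range_self n)
  have hs : iSup (fun n => (f n).1) < OO.{u} := by
    refine Cardinal.iSup_lt_ord_lift_of_isRegular regO ?_ hlt
    rw [Cardinal.mk_nat, Cardinal.lift_aleph0, ← Cardinal.aleph_zero]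
    exact Cardinal.aleph_lt_aleph.mpr (by norm_num)
  have hbdd : BddAbove (Set.range fun n => (f n).1) :=
    ⟨OO, by rintro _ ⟨n, rfl⟩; exact (hlt n).le⟩
  intro hcl
  have hsub : closure (Set.range f) ⊆ Subtype.val ⁻¹' Set.Iic (iSup fun n => (f n).1) := by
    refine closure_minimal ?_ (isClosed_Iic.preimage continuous_subtype_val)
    rintro _ ⟨n, rfl⟩
    exact le_ciSup hbdd n
  have : OO.{u} ≤ iSup fun n => (f n).1 := hsub hcl
  exact absurd (this.trans_lt hs) (lt_irrefl _)


lemma case2 (hemb : Topology.IsEmbedding e)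
    (hrange : Set.range e = closure (Set.range e ∩ {x | {a | x a ≠ 0}.Countable}))
    (hnc : ¬ {a | e tp a ≠ 0}.Countable) : False := by
  set T := {a | e tp.{u} a ≠ 0} with hT
  have h0 : ¬ (#↥T ≤ ℵ₀) := fun hle => hnc (Cardinal.le_aleph0_iff_set_countable.mp hle)
  have h1 : ℵ₁ ≤ #↥T := by
    rw [← Cardinal.succ_aleph0]
    exact Order.succ_le_of_lt (not_le.mp h0)
  obtain ⟨g⟩ : Nonempty ((Cardinal.aleph.{u} 1).out ↪ ↥T) := by
    rw [← Cardinal.lift_mk_le']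
    rw [Cardinal.mk_out, Cardinal.lift_aleph, Ordinal.lift_one, Cardinal.lift_id'.{u, u+1}]
    exact h1
  choose γe hγO hγ using fun a : κ => eventual e hemb a
  have hδ : iSup (fun i : (Cardinal.aleph.{u} 1).out => γe (g i).1) < OO.{u} := by
    refine Cardinal.iSup_lt_ord_of_isRegular regO ?_ (fun i => hγO _)
    rw [Cardinal.mk_out]
    exact Cardinal.aleph_lt_aleph.mpr one_lt_two
  have hsucc : iSup (fun i : (Cardinal.aleph.{u} 1).out => γe (g i).1) + 1 ≤ OO.{u} := by
    rw [Ordinal.add_one_eq_succ]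
    exact (limitO.succ_lt hδ).le
  set x : XX.{u} := ⟨_, hsucc⟩ with hx
  have hxopen : IsOpen {x} := isolated _ hsucc
  have hxc := memSigma e hemb hrange hxopen
  have hbdd : BddAbove (Set.range fun i : (Cardinal.aleph.{u} 1).out => γe (g i).1) :=
    ⟨OO, by rintro _ ⟨i, rfl⟩; exact (hγO _).le⟩
  have hmem : ∀ i, (g i).1 ∈ {a | e x a ≠ 0} := by
    intro i
    have hlt : γe (g i).1 < x.1 := by
      refine lt_of_le_of_lt (le_ciSup hbdd i) ?_
      show iSup _ < iSup _ + 1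
      rw [Ordinal.add_one_eq_succ]
      exact Order.lt_succ _
    have := hγ (g i).1 x hlt
    show e x (g i).1 ≠ 0
    rw [this]
    exact (g i).2
  haveI : Countable ↥{a | e x a ≠ 0} := hxc.to_subtype
  have hinj : Function.Injective
      (fun i : (Cardinal.aleph.{u} 1).out => (⟨(g i).1, hmem i⟩ : ↥{a | e x a ≠ 0})) := by
    intro i j hij
    apply g.injective
    have h3 := congrArg Subtype.val hij
    exact Subtype.ext h3
  haveI : Countable (Cardinal.aleph.{u} 1).out := Function.Injective.countable hinj
  have hle : #((Cardinal.aleph.{u} 1).out) ≤ ℵ₀ := Cardinal.mk_le_aleph0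
  rw [Cardinal.mk_out] at hle
  exact absurd hle (not_le.mpr Cardinal.aleph0_lt_aleph_one)

lemma case1 (hemb : Topology.IsEmbedding e)
    (hrange : Set.range e = closure (Set.range e ∩ {x | {a | x a ≠ 0}.Countable}))
    (hc : {a | e tp a ≠ 0}.Countable) : False := by
  classical
  have hex : ∀ (F : Finset κ) (m : ℕ), ∃ x : XX.{u}, x.1 < OO.{u} ∧ IsOpen {x} ∧
      ∀ a ∈ F, dist (e x a) (e tp a) < 1/(m+1) := by
    intro F m
    have hev : ∀ a ∈ F, ∀ᶠ x : XX.{u} in 𝓝 tp.{u}, dist (e x a) (e tp a) < 1/(m+1) := by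
      intro a _
      exact Metric.tendsto_nhds.mp
        (((continuous_apply a).comp hemb.continuous).continuousAt) _ (by positivity)
    have hV : {x : XX.{u} | ∀ a ∈ F, dist (e x a) (e tp a) < 1/(m+1)} ∈ 𝓝 tp.{u} :=
      (Filter.eventually_all_finset F).mpr hev
    obtain ⟨γ, hγ, htail⟩ := tail_mem hV
    have h1 : γ + 1 ≤ OO.{u} := by
      rw [Ordinal.add_one_eq_succ]; exact (limitO.succ_lt hγ).le
    refine ⟨⟨γ+1, h1⟩, ?_, isolated γ h1, htail _ ?_⟩
    · show γ + 1 < OO.{u}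
      rw [Ordinal.add_one_eq_succ]; exact limitO.succ_lt hγ
    · show γ < γ + 1
      rw [Ordinal.add_one_eq_succ]; exact Order.lt_succ γ
  choose pt hptlt hptopen hptdist using hex
  have hptc : ∀ F m, {a | e (pt F m) a ≠ 0}.Countable := fun F m =>
    memSigma e hemb hrange (hptopen F m)
  set B : Set XX.{u} :=
    ⋃ (n : ℕ), ⋃ (F : Finset κ) (_ : ↑F ⊆ SS e pt n), ⋃ (m : ℕ), {pt F m} with hB
  have hBc : B.Countable := by
    refine Set.countable_iUnion fun n => ?_
    have heq : (⋃ (F : Finset κ) (_ : ↑F ⊆ SS e pt n), ⋃ (m : ℕ), ({pt F m} : Set XX.{u}))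
        = ⋃ F ∈ {F : Finset κ | ↑F ⊆ SS e pt n}, ⋃ (m : ℕ), {pt F m} := rfl
    rw [heq]
    exact (finsetSub_countable (SS_countable e pt hc hptc n)).biUnion
      fun F _ => Set.countable_iUnion fun m => Set.countable_singleton _
  have hBlt : ∀ b ∈ B, b.1 < OO.{u} := by
    intro b hb
    simp only [hB, Set.mem_iUnion, Set.mem_singleton_iff] at hb
    obtain ⟨n, F, hF, m, rfl⟩ := hb
    exact hptlt F m
  have hclostop : e tp ∈ closure (e '' B) := by
    rw [mem_closure_iff]
    intro U hU hxU
    obtain ⟨I, uu, hIu, hpi⟩ := isOpen_pi_iff.mp hU _ hxU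
    have hball : ∀ a, a ∈ I → ∃ n : ℕ, Metric.ball (e tp a) (1/(n+1)) ⊆ uu a := by
      intro a ha
      obtain ⟨r, hr, hrsub⟩ := Metric.isOpen_iff.mp (hIu a ha).1 _ (hIu a ha).2
      obtain ⟨n, hn⟩ := exists_nat_one_div_lt hr
      exact ⟨n, (Metric.ball_subset_ball hn.le).trans hrsub⟩
    choose! nb hnb using hball
    set Sω : Set κ := ⋃ n, SS e pt n with hSω
    have hfin : ((I : Set κ) ∩ Sω).Finite := I.finite_toSet.inter_of_left _
    set F₀ : Finset κ := hfin.toFinset with hF₀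
    let k : κ → ℕ := fun a => if h : ∃ n, a ∈ SS e pt n then h.choose else 0
    have hkmem : ∀ a ∈ F₀, a ∈ SS e pt (k a) := by
      intro a ha
      rw [hF₀, Set.Finite.mem_toFinset] at ha
      obtain ⟨-, hmem⟩ := ha
      rw [hSω, Set.mem_iUnion] at hmem
      show a ∈ SS e pt (if h : ∃ n, a ∈ SS e pt n then h.choose else 0)
      rw [dif_pos hmem]
      exact hmem.choose_spec
    set N := F₀.sup k with hN
    have hF0sub : ↑F₀ ⊆ SS e pt N := by
      intro a ha
      have ha' : a ∈ F₀ := ha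
      exact SS_mono e pt (Finset.le_sup ha') (hkmem a ha')
    set m := F₀.sup nb with hm
    refine ⟨e (pt F₀ m), ?_, Set.mem_image_of_mem e ?_⟩
    · apply hpi
      rw [Set.mem_pi]
      intro a ha
      have haI : a ∈ I := ha
      by_cases hmem : a ∈ Sω
      · have haF : a ∈ F₀ := by rw [hF₀, Set.Finite.mem_toFinset]; exact ⟨ha, hmem⟩
        have hd : dist (e (pt F₀ m) a) (e tp a) < 1/(m+1) := hptdist F₀ m a haF
        have hle : (1:ℝ)/(m+1) ≤ 1/(nb a+1) := by
          apply one_div_le_one_div_of_le (by positivity)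
          have hnm : nb a ≤ m := Finset.le_sup haF
          have : ((nb a : ℝ)) ≤ (m : ℝ) := Nat.cast_le.mpr hnm
          linarith
        exact hnb a haI (Metric.mem_ball.mpr (lt_of_lt_of_le hd hle))
      · have h0top : e tp a = 0 := by
          by_contra hne
          exact hmem (Set.mem_iUnion.mpr ⟨0, hne⟩)
        have h0b : e (pt F₀ m) a = 0 := by
          by_contra hne
          apply hmem
          rw [hSω, Set.mem_iUnion]
          refine ⟨N+1, Set.mem_union_right _ ?_⟩
          exact Set.mem_iUnion.mpr ⟨F₀, Set.mem_iUnion.mpr ⟨hF0sub, Set.mem_iUnion.mpr ⟨m, hne⟩⟩⟩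
        rw [h0b, ← h0top]
        exact (hIu a haI).2
    · rw [hB]
      exact Set.mem_iUnion.mpr ⟨N, Set.mem_iUnion.mpr ⟨F₀,
        Set.mem_iUnion.mpr ⟨hF0sub, Set.mem_iUnion.mpr ⟨m, rfl⟩⟩⟩⟩
  have htop : tp.{u} ∈ closure B := by
    rw [hemb.closure_eq_preimage_closure_image]
    exact hclostop
  exact not_top_mem_closure hBc hBlt htop


end Main

end

end Omega2V

/-- the ordinal space `ω₂ + 1` (all ordinals `≤ ω₂`, with the order
topology) is not Valdivia compact. -/
theorem omega2_plus_one_not_valdivia :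
    ¬ IsValdiviaCompact (↥(Set.Iic (Cardinal.aleph 2).ord)) := by
  rintro ⟨-, -, κ, e, hemb, hrange⟩
  by_cases hc : {a | e Omega2V.tp a ≠ 0}.Countable
  · exact Omega2V.case1 e hemb hrange hc
  · exact Omega2V.case2 e hemb hrange hc
end
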